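/- Assume (A1): σ : ℝ×[0,T] → ℝ is bounded, bounded away from zero and Lipschitz continuous. Then there exists a constant M>0 such that for all κ>0 and all functions f : ℝ×[0,T] → ℝ that are bounded and Hölder continuous on compact subsets, every bounded classical (C^{2,1}) solution v of the Cauchy problem D_t v + (σ²(x,t)/2)·D_x² v + f(x,t) = 0 on ℝ×[0,T) with v(x,T) = 0 for all x ∈ ℝ satisfies sup_{(x,t)∈ℝ×[0,T)} e^{−κ(T−t)}|D_x v(x,t)| ≤ (M/κ^{1/3})·sup_{(x,t)∈ℝ×[0,T]} e^{−κ(T−t)}|f(x,t)|. -/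

import Mathlib

open Set

/-- Partial derivative in the space variable `x`. -/
noncomputable def Dx (u : ℝ → ℝ → ℝ) (x t : ℝ) : ℝ := deriv (fun y => u y t) x

/-- Second partial derivative in the space variable `x`. -/
noncomputable def Dxx (u : ℝ → ℝ → ℝ) (x t : ℝ) : ℝ := deriv (fun y => Dx u y t) x

/-- Partial derivative in the time variable `t`. -/
noncomputable def Dt (u : ℝ → ℝ → ℝ) (x t : ℝ) : ℝ := deriv (fun s => u x s) t

/-- (A1): `σ` is bounded, bounded away from zero and Lipschitz continuous on `ℝ×[0,T]`. -/
def CondA1 (T : ℝ) (σ : ℝ → ℝ → ℝ) : Prop :=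
  (∃ C, ∀ x : ℝ, ∀ t ∈ Icc (0:ℝ) T, |σ x t| ≤ C) ∧
  (∃ m > 0, ∀ x : ℝ, ∀ t ∈ Icc (0:ℝ) T, m ≤ |σ x t|) ∧
  (∃ L > 0, ∀ x x' : ℝ, ∀ t ∈ Icc (0:ℝ) T, ∀ t' ∈ Icc (0:ℝ) T,
    |σ x t - σ x' t'| ≤ L * (|x - x'| + |t - t'|))

/-- Hölder continuity on compact subsets of a set `O ⊆ ℝ²`. -/
def HolderOnCompacts (O : Set (ℝ × ℝ)) (f : ℝ → ℝ → ℝ) : Prop :=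
  ∀ U ⊆ O, IsCompact U → ∃ L > 0, ∃ l ∈ Ioc (0:ℝ) 1,
    ∀ p ∈ U, ∀ q ∈ U, |f p.1 p.2 - f q.1 q.2| ≤ L * ‖p - q‖ ^ l

/-- `v` is a bounded classical solution of the terminal-value Cauchy problem
`D_t v + (σ²/2)·D_x² v + f = 0` on `ℝ×[0,T)` with `v(·,T) = 0`. -/
def IsBddClassicalSolCauchy (T : ℝ) (σ f v : ℝ → ℝ → ℝ) : Prop :=
  (∃ C, ∀ x : ℝ, ∀ t ∈ Icc (0:ℝ) T, |v x t| ≤ C) ∧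
  ContinuousOn (fun p : ℝ × ℝ => v p.1 p.2) (univ ×ˢ Icc 0 T) ∧
  (∀ x : ℝ, ∀ t ∈ Ico (0:ℝ) T,
    DifferentiableAt ℝ (fun y => v y t) x ∧
    DifferentiableAt ℝ (fun y => Dx v y t) x ∧
    DifferentiableAt ℝ (fun s => v x s) t) ∧
  ContinuousOn (fun p : ℝ × ℝ => Dx v p.1 p.2) (univ ×ˢ Ico 0 T) ∧
  ContinuousOn (fun p : ℝ × ℝ => Dxx v p.1 p.2) (univ ×ˢ Ico 0 T) ∧
  ContinuousOn (fun p : ℝ × ℝ => Dt v p.1 p.2) (univ ×ˢ Ico 0 T) ∧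
  (∀ x : ℝ, ∀ t ∈ Ico (0:ℝ) T,
    Dt v x t + σ x t ^ 2 / 2 * Dxx v x t + f x t = 0) ∧
  (∀ x : ℝ, v x T = 0)

open Filter Topology

/-- Second derivative test: at a local max, the second derivative is nonpositive. -/
lemma second_deriv_test (ψ ψ' : ℝ → ℝ) (x₀ q : ℝ)
    (hd : ∀ x, HasDerivAt ψ (ψ' x) x)
    (hd2 : HasDerivAt ψ' q x₀)
    (hmax : IsLocalMax ψ x₀) : q ≤ 0 := by
  by_contra h
  push_neg at h
  have h1 : ψ' x₀ = 0 := by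
    have h0 := hmax.deriv_eq_zero
    rwa [(hd x₀).deriv] at h0
  have hslope : Tendsto (slope ψ' x₀) (𝓝[≠] x₀) (𝓝 q) :=
    hasDerivAt_iff_tendsto_slope.mp hd2
  have hev : ∀ᶠ z in 𝓝[≠] x₀, 0 < slope ψ' x₀ z := hslope.eventually (lt_mem_nhds h)
  have hev' : ∀ᶠ z in 𝓝[>] x₀, 0 < ψ' z := by
    have := hev.filter_mono (nhdsWithin_mono x₀ (fun z hz => ne_of_gt hz))
    filter_upwards [this, self_mem_nhdsWithin] with z hz hz'
    have hz'' : 0 < z - x₀ := sub_pos.mpr hz'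
    have : slope ψ' x₀ z = (ψ' z - ψ' x₀) / (z - x₀) := by
      simp [slope, div_eq_inv_mul]
    rw [this, h1, sub_zero] at hz
    exact (div_pos_iff.mp hz).resolve_right (fun ⟨h1', _⟩ => absurd hz'' (by linarith)) |>.1
  have hev2 : ∀ᶠ z in 𝓝[>] x₀, ψ z ≤ ψ x₀ := hmax.filter_mono nhdsWithin_le_nhds
  obtain ⟨u, hu, hsub⟩ := mem_nhdsGT_iff_exists_Ioo_subset.mp (hev'.and hev2)
  set b := (x₀ + u) / 2 with hb
  have hx₀b : x₀ < b := by simp only [hb]; linarith [hu.out]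
  have hbu : b < u := by simp only [hb]; linarith [hu.out]
  have hmono : StrictMonoOn ψ (Icc x₀ b) := by
    apply strictMonoOn_of_deriv_pos (convex_Icc _ _)
    · exact (Differentiable.continuous (fun x => (hd x).differentiableAt)).continuousOn
    · intro z hz
      rw [interior_Icc] at hz
      rw [(hd z).deriv]
      exact (hsub ⟨hz.1, lt_trans hz.2 hbu⟩).1
  have h2 : ψ x₀ < ψ b := hmono (left_mem_Icc.mpr hx₀b.le) (right_mem_Icc.mpr hx₀b.le) hx₀b
  have h3 : ψ b ≤ ψ x₀ := (hsub ⟨hx₀b, hbu⟩).2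
  linarith

/-- If a differentiable function has a max on the right, its derivative is nonpositive. -/
lemma right_deriv_nonpos (φ : ℝ → ℝ) (t₀ b d : ℝ) (htb : t₀ < b)
    (hd : HasDerivAt φ d t₀) (hmax : ∀ t ∈ Ioc t₀ b, φ t ≤ φ t₀) : d ≤ 0 := by
  have hslope : Tendsto (slope φ t₀) (𝓝[>] t₀) (𝓝 d) :=
    (hasDerivAt_iff_tendsto_slope.mp hd).mono_left
      (nhdsWithin_mono t₀ (fun z hz => ne_of_gt hz))
  have hev : ∀ᶠ z in 𝓝[>] t₀, slope φ t₀ z ≤ 0 := by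
    filter_upwards [Ioc_mem_nhdsGT_of_mem (⟨le_refl t₀, htb⟩ : t₀ ∈ Ico t₀ b)] with z hz
    have h1 : φ z - φ t₀ ≤ 0 := sub_nonpos.mpr (hmax z hz)
    have h2 : 0 < z - t₀ := sub_pos.mpr hz.1
    have : slope φ t₀ z = (φ z - φ t₀) / (z - t₀) := by simp [slope, div_eq_inv_mul]
    rw [this]
    exact div_nonpos_of_nonpos_of_nonneg h1 h2.le
  exact le_of_tendsto hslope hev

/-- Derivative bound from a two-sided Lipschitz-type bound. -/
lemma abs_deriv_le_of_lip (φ : ℝ → ℝ) (x L : ℝ)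
    (hd : DifferentiableAt ℝ φ x)
    (h : ∀ y, |φ y - φ x| ≤ L * |y - x|) : |deriv φ x| ≤ L := by
  have hslope : Tendsto (slope φ x) (𝓝[≠] x) (𝓝 (deriv φ x)) :=
    hasDerivAt_iff_tendsto_slope.mp hd.hasDerivAt
  have habs : Tendsto (fun z => |slope φ x z|) (𝓝[≠] x) (𝓝 |deriv φ x|) := hslope.abs
  apply le_of_tendsto habs
  filter_upwards [self_mem_nhdsWithin] with z hz
  have hz' : z - x ≠ 0 := sub_ne_zero.mpr hz
  have : slope φ x z = (φ z - φ x) / (z - x) := by simp [slope, div_eq_inv_mul]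
  rw [this, abs_div]
  rw [div_le_iff₀ (abs_pos.mpr hz')]
  exact h z

noncomputable def GG (T κ A₀ A₁ lam Ca ε : ℝ) (v : ℝ → ℝ → ℝ) (x y t : ℝ) : ℝ :=
  Real.exp (-κ * (T - t)) * (v x t - v y t)
    - (A₀ + A₁ * (T - t)) * (1 - Real.exp (-lam * (x - y)))
    - ε * (x ^ 2 + y ^ 2) - 2 * Ca * ε * (T - t)

set_option maxHeartbeats 1000000 in
lemma coreZ (T : ℝ) (hT : 0 < T) (κ : ℝ) (hκ : 0 ≤ κ)
    (a : ℝ → ℝ → ℝ) (m2 Ca : ℝ) (hm2 : 0 < m2) (hCa : 0 ≤ Ca)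
    (ha1 : ∀ x : ℝ, ∀ t ∈ Icc (0:ℝ) T, m2 ≤ a x t)
    (ha2 : ∀ x : ℝ, ∀ t ∈ Icc (0:ℝ) T, a x t ≤ Ca)
    (v f : ℝ → ℝ → ℝ)
    (K : ℝ) (hK : ∀ x : ℝ, ∀ t ∈ Icc (0:ℝ) T, |v x t| ≤ K)
    (hcont : ContinuousOn (fun p : ℝ × ℝ => v p.1 p.2) (univ ×ˢ Icc 0 T))
    (hdiff : ∀ x : ℝ, ∀ t ∈ Ico (0:ℝ) T,
      DifferentiableAt ℝ (fun y => v y t) x ∧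
      DifferentiableAt ℝ (fun y => Dx v y t) x ∧
      DifferentiableAt ℝ (fun s => v x s) t)
    (hpde : ∀ x : ℝ, ∀ t ∈ Ico (0:ℝ) T, Dt v x t + a x t * Dxx v x t + f x t = 0)
    (hterm : ∀ x : ℝ, v x T = 0)
    (N : ℝ) (hN : ∀ x : ℝ, ∀ t ∈ Icc (0:ℝ) T, Real.exp (-κ * (T - t)) * |f x t| ≤ N)
    (A₀ A₁ lam : ℝ) (hA₀ : 0 < A₀) (hA₁ : 0 ≤ A₁) (hlam : 0 < lam)
    (ε : ℝ) (hε : 0 < ε)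
    (hεsmall : 2 * Ca * ε < min (κ * A₀ + A₁) (m2 * A₀ * lam ^ 2) - 2 * N) :
    ∀ x y t : ℝ, y ≤ x → t ∈ Icc (0:ℝ) T → GG T κ A₀ A₁ lam Ca ε v x y t ≤ 0 := by
  have hK0 : 0 ≤ K := le_trans (abs_nonneg _) (hK 0 0 ⟨le_refl _, hT.le⟩)
  obtain ⟨R2, hR2def⟩ : ∃ r : ℝ, r = (2 * K + 1) / ε := ⟨_, rfl⟩
  have hR2 : 0 ≤ R2 := by rw [hR2def]; positivity
  obtain ⟨Gm, hGmdef⟩ : ∃ g : ℝ × ℝ × ℝ → ℝ,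
      g = fun p => GG T κ A₀ A₁ lam Ca ε v p.1 p.2.1 p.2.2 := ⟨_, rfl⟩
  obtain ⟨S', hS'def⟩ : ∃ s : Set (ℝ × ℝ × ℝ),
      s = {p | p.2.1 ≤ p.1 ∧ p.2.2 ∈ Icc (0:ℝ) T ∧ p.1 ^ 2 + p.2.1 ^ 2 ≤ R2} := ⟨_, rfl⟩
  have hGm : ∀ x y t : ℝ, Gm (x, y, t) =
      Real.exp (-κ * (T - t)) * (v x t - v y t)
        - (A₀ + A₁ * (T - t)) * (1 - Real.exp (-lam * (x - y)))
        - ε * (x ^ 2 + y ^ 2) - 2 * Ca * ε * (T - t) := by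
    intro x y t; rw [hGmdef]; rfl
  have hSmem : ∀ x y t : ℝ, (x, y, t) ∈ S' ↔
      (y ≤ x ∧ t ∈ Icc (0:ℝ) T ∧ x ^ 2 + y ^ 2 ≤ R2) := by
    intro x y t; rw [hS'def]; rfl
  -- compactness of S'
  have hclosed : IsClosed S' := by
    have hrw : S' = {p : ℝ × ℝ × ℝ | p.2.1 ≤ p.1} ∩
        ((fun p : ℝ × ℝ × ℝ => p.2.2) ⁻¹' Icc (0:ℝ) T ∩
         {p : ℝ × ℝ × ℝ | p.1 ^ 2 + p.2.1 ^ 2 ≤ R2}) := by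
      rw [hS'def]; ext p; simp [and_assoc]
    rw [hrw]
    refine IsClosed.inter ?_ (IsClosed.inter ?_ ?_)
    · exact isClosed_le (continuous_snd.fst) continuous_fst
    · exact IsClosed.preimage (continuous_snd.snd) isClosed_Icc
    · exact isClosed_le (by fun_prop) continuous_const
  have hsubcube : S' ⊆ Icc (-Real.sqrt R2) (Real.sqrt R2) ×ˢ
      (Icc (-Real.sqrt R2) (Real.sqrt R2) ×ˢ Icc (0:ℝ) T) := by
    rintro ⟨x, y, t⟩ hp
    obtain ⟨h1, h2, h3⟩ := (hSmem x y t).mp hp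
    have hx2 : x ^ 2 ≤ R2 := by nlinarith [sq_nonneg y]
    have hy2 : y ^ 2 ≤ R2 := by nlinarith [sq_nonneg x]
    have hx : |x| ≤ Real.sqrt R2 := by
      rw [← Real.sqrt_sq_eq_abs]; exact Real.sqrt_le_sqrt hx2
    have hy : |y| ≤ Real.sqrt R2 := by
      rw [← Real.sqrt_sq_eq_abs]; exact Real.sqrt_le_sqrt hy2
    exact ⟨abs_le.mp hx, abs_le.mp hy, h2⟩
  have hcomp : IsCompact S' :=
    IsCompact.of_isClosed_subset
      (isCompact_Icc.prod (isCompact_Icc.prod isCompact_Icc)) hclosed hsubcube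
  -- continuity of Gm on the strip
  have hsubstrip : S' ⊆ (univ ×ˢ univ ×ˢ Icc (0:ℝ) T) := by
    rintro ⟨x, y, t⟩ hp
    exact ⟨mem_univ _, mem_univ _, ((hSmem x y t).mp hp).2.1⟩
  have hv1 : ContinuousOn (fun p : ℝ × ℝ × ℝ => v p.1 p.2.2) (univ ×ˢ univ ×ˢ Icc (0:ℝ) T) := by
    show ContinuousOn ((fun p : ℝ × ℝ => v p.1 p.2) ∘ (fun p : ℝ × ℝ × ℝ => (p.1, p.2.2)))
      (univ ×ˢ univ ×ˢ Icc (0:ℝ) T)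
    apply hcont.comp (Continuous.continuousOn (by fun_prop))
    rintro ⟨x, y, t⟩ ⟨h1, h2, h3⟩
    exact ⟨mem_univ _, h3⟩
  have hv2 : ContinuousOn (fun p : ℝ × ℝ × ℝ => v p.2.1 p.2.2) (univ ×ˢ univ ×ˢ Icc (0:ℝ) T) := by
    show ContinuousOn ((fun p : ℝ × ℝ => v p.1 p.2) ∘ (fun p : ℝ × ℝ × ℝ => (p.2.1, p.2.2)))
      (univ ×ˢ univ ×ˢ Icc (0:ℝ) T)
    apply hcont.comp (Continuous.continuousOn (by fun_prop))
    rintro ⟨x, y, t⟩ ⟨h1, h2, h3⟩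
    exact ⟨mem_univ _, h3⟩
  have hGc : ContinuousOn Gm (univ ×ˢ univ ×ˢ Icc (0:ℝ) T) := by
    rw [hGmdef]
    simp only [GG]
    apply ContinuousOn.sub
    apply ContinuousOn.sub
    apply ContinuousOn.sub
    · exact ContinuousOn.mul (Continuous.continuousOn (by fun_prop)) (hv1.sub hv2)
    · exact Continuous.continuousOn (by fun_prop)
    · exact Continuous.continuousOn (by fun_prop)
    · exact Continuous.continuousOn (by fun_prop)
  have hmem0 : ((0:ℝ), (0:ℝ), T) ∈ S' := by
    rw [hSmem]
    refine ⟨le_refl _, ⟨hT.le, le_refl _⟩, by norm_num [hR2]⟩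
  have hG00 : Gm ((0:ℝ), (0:ℝ), T) = 0 := by
    rw [hGm]; simp
  obtain ⟨p₀, hp₀S, hp₀max⟩ := hcomp.exists_isMaxOn ⟨_, hmem0⟩ (hGc.mono hsubstrip)
  obtain ⟨x₀, y₀, t₀⟩ := p₀
  obtain ⟨hyx₀, ht₀Icc, hr₀⟩ := (hSmem x₀ y₀ t₀).mp hp₀S
  have hp₀max' : ∀ q ∈ S', Gm q ≤ Gm (x₀, y₀, t₀) := fun q hq => hp₀max hq
  -- outside bound
  have hout : ∀ x y t : ℝ, y ≤ x → t ∈ Icc (0:ℝ) T → ¬(x ^ 2 + y ^ 2 ≤ R2) →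
      Gm (x, y, t) < 0 := by
    intro x y t hxy ht hR
    push_neg at hR
    have he1 : Real.exp (-κ * (T - t)) ≤ 1 := by
      rw [← Real.exp_zero]
      apply Real.exp_le_exp.mpr
      nlinarith [ht.2]
    have he0 : (0:ℝ) < Real.exp (-κ * (T - t)) := Real.exp_pos _
    have hvx := abs_le.mp (hK x t ht)
    have hvy := abs_le.mp (hK y t ht)
    have hE1 : Real.exp (-lam * (x - y)) ≤ 1 := by
      rw [← Real.exp_zero]
      apply Real.exp_le_exp.mpr
      nlinarith
    have hA : (0:ℝ) ≤ A₀ + A₁ * (T - t) := by nlinarith [ht.2]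
    have hterm1 : Real.exp (-κ * (T - t)) * (v x t - v y t) ≤ 2 * K := by
      have h1 : v x t - v y t ≤ 2 * K := by linarith
      calc Real.exp (-κ * (T - t)) * (v x t - v y t)
          ≤ Real.exp (-κ * (T - t)) * (2 * K) := mul_le_mul_of_nonneg_left h1 he0.le
        _ ≤ 1 * (2 * K) := mul_le_mul_of_nonneg_right he1 (by linarith)
        _ = 2 * K := by ring
    have hterm2 : 0 ≤ (A₀ + A₁ * (T - t)) * (1 - Real.exp (-lam * (x - y))) :=
      mul_nonneg hA (by linarith)
    have hterm3 : 2 * K + 1 < ε * (x ^ 2 + y ^ 2) := by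
      have h2 : ε * R2 = 2 * K + 1 := by
        rw [hR2def]; field_simp
      have h3 : ε * R2 < ε * (x ^ 2 + y ^ 2) := mul_lt_mul_of_pos_left hR hε
      linarith
    have hterm4 : 0 ≤ 2 * Ca * ε * (T - t) :=
      mul_nonneg (mul_nonneg (by linarith) hε.le) (by linarith [ht.2])
    rw [hGm]
    linarith
  have hglob : ∀ x y t : ℝ, y ≤ x → t ∈ Icc (0:ℝ) T →
      Gm (x, y, t) ≤ Gm (x₀, y₀, t₀) := by
    intro x y t hxy ht
    by_cases hR : x ^ 2 + y ^ 2 ≤ R2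
    · exact hp₀max' _ ((hSmem x y t).mpr ⟨hxy, ht, hR⟩)
    · have h1 := hout x y t hxy ht hR
      have h2 : (0:ℝ) ≤ Gm (x₀, y₀, t₀) := hG00 ▸ hp₀max' _ hmem0
      linarith
  -- suffices: max value ≤ 0
  suffices hple : Gm (x₀, y₀, t₀) ≤ 0 by
    intro x y t hxy ht
    have := le_trans (hglob x y t hxy ht) hple
    rwa [hGm] at this
  by_contra hpos
  push_neg at hpos
  -- t₀ < T
  have ht₀T : t₀ < T := by
    rcases lt_or_eq_of_le ht₀Icc.2 with h | h
    · exact h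
    · exfalso
      subst h
      rw [hGm] at hpos
      have hE1 : Real.exp (-lam * (x₀ - y₀)) ≤ 1 := by
        rw [← Real.exp_zero]
        apply Real.exp_le_exp.mpr
        have := mul_nonneg hlam.le (sub_nonneg.mpr hyx₀)
        linarith
      rw [hterm x₀, hterm y₀] at hpos
      nlinarith [sq_nonneg x₀, sq_nonneg y₀]
  have hyx : y₀ < x₀ := by
    rcases lt_or_eq_of_le hyx₀ with h | h
    · exact h
    · exfalso
      subst h
      rw [hGm] at hpos
      simp only [sub_self, mul_zero, Real.exp_zero] at hpos
      nlinarith [sq_nonneg y₀, ht₀Icc.2, Real.exp_pos (-κ * (T - t₀)),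
        mul_nonneg (mul_nonneg (mul_nonneg (by norm_num : (0:ℝ) ≤ 2) hCa) hε.le)
          (by linarith [ht₀Icc.2] : (0:ℝ) ≤ T - t₀)]
  have ht₀Ico : t₀ ∈ Ico (0:ℝ) T := ⟨ht₀Icc.1, ht₀T⟩
  have he0 : (0:ℝ) < Real.exp (-κ * (T - t₀)) := Real.exp_pos _
  have hE0 : (0:ℝ) < Real.exp (-lam * (x₀ - y₀)) := Real.exp_pos _
  have hE1 : Real.exp (-lam * (x₀ - y₀)) < 1 := by
    rw [← Real.exp_zero]
    apply Real.exp_lt_exp.mpr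
    have := mul_pos hlam (sub_pos.mpr hyx)
    linarith
  have hAbar : A₀ ≤ A₀ + A₁ * (T - t₀) := by
    have := mul_nonneg hA₁ (by linarith : (0:ℝ) ≤ T - t₀)
    linarith
  -- x-direction second derivative test
  obtain ⟨ψ, hψdef⟩ : ∃ g : ℝ → ℝ, g = fun x' =>
      Real.exp (-κ * (T - t₀)) * (v x' t₀ - v y₀ t₀)
        - (A₀ + A₁ * (T - t₀)) * (1 - Real.exp (-lam * (x' - y₀)))
        - ε * (x' ^ 2 + y₀ ^ 2) - 2 * Ca * ε * (T - t₀) := ⟨_, rfl⟩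
  have hψGm : ∀ x' : ℝ, ψ x' = Gm (x', y₀, t₀) := by
    intro x'; rw [hψdef, hGm]
  have hψd : ∀ x : ℝ, HasDerivAt ψ
      (Real.exp (-κ * (T - t₀)) * Dx v x t₀
        - (A₀ + A₁ * (T - t₀)) * (lam * Real.exp (-lam * (x - y₀))) - ε * (2 * x)) x := by
    intro x
    rw [hψdef]
    have h1 : HasDerivAt (fun x' => v x' t₀) (Dx v x t₀) x := (hdiff x t₀ ht₀Ico).1.hasDerivAt
    have h2 : HasDerivAt (fun x' : ℝ => Real.exp (-lam * (x' - y₀)))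
        (Real.exp (-lam * (x - y₀)) * (-lam)) x := by
      have h3 : HasDerivAt (fun x' : ℝ => -lam * (x' - y₀)) (-lam * 1) x :=
        ((hasDerivAt_id x).sub_const y₀).const_mul (-lam)
      simpa using h3.exp
    have h4 : HasDerivAt (fun x' : ℝ => Real.exp (-κ * (T - t₀)) * (v x' t₀ - v y₀ t₀))
        (Real.exp (-κ * (T - t₀)) * Dx v x t₀) x :=
      (h1.sub_const (v y₀ t₀)).const_mul _
    have h5 : HasDerivAt
        (fun x' : ℝ => (A₀ + A₁ * (T - t₀)) * (1 - Real.exp (-lam * (x' - y₀))))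
        ((A₀ + A₁ * (T - t₀)) * (lam * Real.exp (-lam * (x - y₀)))) x := by
      have := ((hasDerivAt_const x (1:ℝ)).sub h2).const_mul (A₀ + A₁ * (T - t₀))
      refine this.congr_deriv ?_
      ring
    have h6 : HasDerivAt (fun x' : ℝ => ε * (x' ^ 2 + y₀ ^ 2)) (ε * (2 * x)) x := by
      have := ((hasDerivAt_pow 2 x).add_const (y₀ ^ 2)).const_mul ε
      refine this.congr_deriv ?_
      norm_num
    exact ((h4.sub h5).sub h6).sub_const _
  have hψd2 : HasDerivAt (fun x : ℝ =>
      Real.exp (-κ * (T - t₀)) * Dx v x t₀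
        - (A₀ + A₁ * (T - t₀)) * (lam * Real.exp (-lam * (x - y₀))) - ε * (2 * x))
      (Real.exp (-κ * (T - t₀)) * Dxx v x₀ t₀
        + (A₀ + A₁ * (T - t₀)) * (lam ^ 2 * Real.exp (-lam * (x₀ - y₀))) - 2 * ε) x₀ := by
    have hdx : HasDerivAt (fun y => Dx v y t₀) (Dxx v x₀ t₀) x₀ :=
      ((hdiff x₀ t₀ ht₀Ico).2.1).hasDerivAt
    have h2 : HasDerivAt (fun x' : ℝ => Real.exp (-lam * (x' - y₀)))
        (Real.exp (-lam * (x₀ - y₀)) * (-lam)) x₀ := by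
      have h3 : HasDerivAt (fun x' : ℝ => -lam * (x' - y₀)) (-lam * 1) x₀ :=
        ((hasDerivAt_id x₀).sub_const y₀).const_mul (-lam)
      simpa using h3.exp
    have hmid : HasDerivAt
        (fun x : ℝ => (A₀ + A₁ * (T - t₀)) * (lam * Real.exp (-lam * (x - y₀))))
        ((A₀ + A₁ * (T - t₀)) * (lam * (Real.exp (-lam * (x₀ - y₀)) * (-lam)))) x₀ :=
      (h2.const_mul lam).const_mul _
    have hlast : HasDerivAt (fun x : ℝ => ε * (2 * x)) (ε * (2 * 1)) x₀ :=
      ((hasDerivAt_id x₀).const_mul 2).const_mul ε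
    have := ((hdx.const_mul (Real.exp (-κ * (T - t₀)))).sub hmid).sub hlast
    refine this.congr_deriv ?_
    ring
  have hψmax : IsLocalMax ψ x₀ := by
    have hev : ∀ᶠ x in 𝓝 x₀, ψ x ≤ ψ x₀ := by
      filter_upwards [eventually_gt_nhds hyx] with x hx
      rw [hψGm, hψGm]
      exact hglob x y₀ t₀ hx.le ht₀Icc
    exact hev
  have hqx : Real.exp (-κ * (T - t₀)) * Dxx v x₀ t₀
      + (A₀ + A₁ * (T - t₀)) * (lam ^ 2 * Real.exp (-lam * (x₀ - y₀))) - 2 * ε ≤ 0 :=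
    second_deriv_test ψ _ x₀ _ hψd hψd2 hψmax
  -- y-direction second derivative test
  obtain ⟨χ, hχdef⟩ : ∃ g : ℝ → ℝ, g = fun y' =>
      Real.exp (-κ * (T - t₀)) * (v x₀ t₀ - v y' t₀)
        - (A₀ + A₁ * (T - t₀)) * (1 - Real.exp (-lam * (x₀ - y')))
        - ε * (x₀ ^ 2 + y' ^ 2) - 2 * Ca * ε * (T - t₀) := ⟨_, rfl⟩
  have hχGm : ∀ y' : ℝ, χ y' = Gm (x₀, y', t₀) := by
    intro y'; rw [hχdef, hGm]
  have hχd : ∀ y : ℝ, HasDerivAt χ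
      (-(Real.exp (-κ * (T - t₀)) * Dx v y t₀)
        + (A₀ + A₁ * (T - t₀)) * (lam * Real.exp (-lam * (x₀ - y))) - ε * (2 * y)) y := by
    intro y
    rw [hχdef]
    have h1 : HasDerivAt (fun y' => v y' t₀) (Dx v y t₀) y := (hdiff y t₀ ht₀Ico).1.hasDerivAt
    have h2 : HasDerivAt (fun y' : ℝ => Real.exp (-lam * (x₀ - y')))
        (Real.exp (-lam * (x₀ - y)) * (-lam * -1)) y := by
      have h3 : HasDerivAt (fun y' : ℝ => -lam * (x₀ - y')) (-lam * -1) y :=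
        ((hasDerivAt_id y).const_sub x₀).const_mul (-lam)
      exact h3.exp
    have h4 : HasDerivAt (fun y' : ℝ => Real.exp (-κ * (T - t₀)) * (v x₀ t₀ - v y' t₀))
        (Real.exp (-κ * (T - t₀)) * -(Dx v y t₀)) y :=
      (h1.const_sub (v x₀ t₀)).const_mul _
    have h5 : HasDerivAt
        (fun y' : ℝ => (A₀ + A₁ * (T - t₀)) * (1 - Real.exp (-lam * (x₀ - y'))))
        (-((A₀ + A₁ * (T - t₀)) * (lam * Real.exp (-lam * (x₀ - y))))) y := by
      have := ((hasDerivAt_const y (1:ℝ)).sub h2).const_mul (A₀ + A₁ * (T - t₀))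
      refine this.congr_deriv ?_
      ring
    have h6 : HasDerivAt (fun y' : ℝ => ε * (x₀ ^ 2 + y' ^ 2)) (ε * (2 * y)) y := by
      have := ((hasDerivAt_pow 2 y).const_add (x₀ ^ 2)).const_mul ε
      refine this.congr_deriv ?_
      norm_num
    have h7 := ((h4.sub h5).sub h6).sub_const (2 * Ca * ε * (T - t₀))
    refine h7.congr_deriv ?_
    ring
  have hχd2 : HasDerivAt (fun y : ℝ =>
      -(Real.exp (-κ * (T - t₀)) * Dx v y t₀)
        + (A₀ + A₁ * (T - t₀)) * (lam * Real.exp (-lam * (x₀ - y))) - ε * (2 * y))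
      (-(Real.exp (-κ * (T - t₀)) * Dxx v y₀ t₀)
        + (A₀ + A₁ * (T - t₀)) * (lam ^ 2 * Real.exp (-lam * (x₀ - y₀))) - 2 * ε) y₀ := by
    have hdy : HasDerivAt (fun y => Dx v y t₀) (Dxx v y₀ t₀) y₀ :=
      ((hdiff y₀ t₀ ht₀Ico).2.1).hasDerivAt
    have h2 : HasDerivAt (fun y' : ℝ => Real.exp (-lam * (x₀ - y')))
        (Real.exp (-lam * (x₀ - y₀)) * (-lam * -1)) y₀ := by
      have h3 : HasDerivAt (fun y' : ℝ => -lam * (x₀ - y')) (-lam * -1) y₀ :=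
        ((hasDerivAt_id y₀).const_sub x₀).const_mul (-lam)
      exact h3.exp
    have hmid : HasDerivAt
        (fun y : ℝ => (A₀ + A₁ * (T - t₀)) * (lam * Real.exp (-lam * (x₀ - y))))
        ((A₀ + A₁ * (T - t₀)) * (lam * (Real.exp (-lam * (x₀ - y₀)) * (-lam * -1)))) y₀ :=
      (h2.const_mul lam).const_mul _
    have hlast : HasDerivAt (fun y : ℝ => ε * (2 * y)) (ε * (2 * 1)) y₀ :=
      ((hasDerivAt_id y₀).const_mul 2).const_mul ε
    have := (((hdy.const_mul (Real.exp (-κ * (T - t₀)))).neg).add hmid).sub hlast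
    refine this.congr_deriv ?_
    ring
  have hχmax : IsLocalMax χ y₀ := by
    have hev : ∀ᶠ y in 𝓝 y₀, χ y ≤ χ y₀ := by
      filter_upwards [eventually_lt_nhds hyx] with y hy
      rw [hχGm, hχGm]
      exact hglob x₀ y t₀ hy.le ht₀Icc
    exact hev
  have hqy : -(Real.exp (-κ * (T - t₀)) * Dxx v y₀ t₀)
      + (A₀ + A₁ * (T - t₀)) * (lam ^ 2 * Real.exp (-lam * (x₀ - y₀))) - 2 * ε ≤ 0 :=
    second_deriv_test χ _ y₀ _ hχd hχd2 hχmax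
  -- time direction
  obtain ⟨θ, hθdef⟩ : ∃ g : ℝ → ℝ, g = fun s =>
      Real.exp (-κ * (T - s)) * (v x₀ s - v y₀ s)
        - (A₀ + A₁ * (T - s)) * (1 - Real.exp (-lam * (x₀ - y₀)))
        - ε * (x₀ ^ 2 + y₀ ^ 2) - 2 * Ca * ε * (T - s) := ⟨_, rfl⟩
  have hθGm : ∀ s : ℝ, θ s = Gm (x₀, y₀, s) := by
    intro s; rw [hθdef, hGm]
  have hθd : HasDerivAt θ
      (Real.exp (-κ * (T - t₀)) * κ * (v x₀ t₀ - v y₀ t₀)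
        + Real.exp (-κ * (T - t₀)) * (Dt v x₀ t₀ - Dt v y₀ t₀)
        + A₁ * (1 - Real.exp (-lam * (x₀ - y₀))) + 2 * Ca * ε) t₀ := by
    rw [hθdef]
    have hin : HasDerivAt (fun s : ℝ => -κ * (T - s)) (-κ * -1) t₀ :=
      ((hasDerivAt_id t₀).const_sub T).const_mul (-κ)
    have hexp : HasDerivAt (fun s : ℝ => Real.exp (-κ * (T - s)))
        (Real.exp (-κ * (T - t₀)) * (-κ * -1)) t₀ := hin.exp
    have hvv : HasDerivAt (fun s : ℝ => v x₀ s - v y₀ s)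
        (Dt v x₀ t₀ - Dt v y₀ t₀) t₀ :=
      ((hdiff x₀ t₀ ht₀Ico).2.2.hasDerivAt).sub ((hdiff y₀ t₀ ht₀Ico).2.2.hasDerivAt)
    have hprod := hexp.mul hvv
    have hρ : HasDerivAt
        (fun s : ℝ => (A₀ + A₁ * (T - s)) * (1 - Real.exp (-lam * (x₀ - y₀))))
        ((A₁ * -1) * (1 - Real.exp (-lam * (x₀ - y₀)))) t₀ := by
      have h1 : HasDerivAt (fun s : ℝ => A₀ + A₁ * (T - s)) (A₁ * -1) t₀ :=
        (((hasDerivAt_id t₀).const_sub T).const_mul A₁).const_add A₀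
      exact h1.mul_const _
    have hlin : HasDerivAt (fun s : ℝ => 2 * Ca * ε * (T - s)) (2 * Ca * ε * -1) t₀ :=
      ((hasDerivAt_id t₀).const_sub T).const_mul (2 * Ca * ε)
    have := ((hprod.sub hρ).sub_const (ε * (x₀ ^ 2 + y₀ ^ 2))).sub hlin
    refine this.congr_deriv ?_
    ring
  have hθmax : ∀ s ∈ Ioc t₀ T, θ s ≤ θ t₀ := by
    intro s hs
    rw [hθGm, hθGm]
    exact hglob x₀ y₀ s hyx.le ⟨le_trans ht₀Icc.1 hs.1.le, hs.2⟩
  have hdθ : Real.exp (-κ * (T - t₀)) * κ * (v x₀ t₀ - v y₀ t₀)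
        + Real.exp (-κ * (T - t₀)) * (Dt v x₀ t₀ - Dt v y₀ t₀)
        + A₁ * (1 - Real.exp (-lam * (x₀ - y₀))) + 2 * Ca * ε ≤ 0 :=
    right_deriv_nonpos θ t₀ T _ ht₀T hθd hθmax
  -- arithmetic contradiction
  -- abbreviations (all inequalities made explicit for linarith)
  have hpdex : Dt v x₀ t₀ = -(a x₀ t₀ * Dxx v x₀ t₀) - f x₀ t₀ := by
    have := hpde x₀ t₀ ht₀Ico; linarith
  have hpdey : Dt v y₀ t₀ = -(a y₀ t₀ * Dxx v y₀ t₀) - f y₀ t₀ := by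
    have := hpde y₀ t₀ ht₀Ico; linarith
  have hax1 : m2 ≤ a x₀ t₀ := ha1 x₀ t₀ ht₀Icc
  have hax2 : a x₀ t₀ ≤ Ca := ha2 x₀ t₀ ht₀Icc
  have hay1 : m2 ≤ a y₀ t₀ := ha1 y₀ t₀ ht₀Icc
  have hay2 : a y₀ t₀ ≤ Ca := ha2 y₀ t₀ ht₀Icc
  have hax0 : (0:ℝ) < a x₀ t₀ := lt_of_lt_of_le hm2 hax1
  have hay0 : (0:ℝ) < a y₀ t₀ := lt_of_lt_of_le hm2 hay1
  have hfx1 : Real.exp (-κ * (T - t₀)) * f x₀ t₀ ≤ N :=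
    le_trans (mul_le_mul_of_nonneg_left (le_abs_self _) he0.le) (hN x₀ t₀ ht₀Icc)
  have hfx2 : -N ≤ Real.exp (-κ * (T - t₀)) * f x₀ t₀ := by
    have h1 : Real.exp (-κ * (T - t₀)) * -(f x₀ t₀) ≤ N :=
      le_trans (mul_le_mul_of_nonneg_left (neg_le_abs _) he0.le) (hN x₀ t₀ ht₀Icc)
    linarith
  have hfy1 : Real.exp (-κ * (T - t₀)) * f y₀ t₀ ≤ N :=
    le_trans (mul_le_mul_of_nonneg_left (le_abs_self _) he0.le) (hN y₀ t₀ ht₀Icc)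
  have hfy2 : -N ≤ Real.exp (-κ * (T - t₀)) * f y₀ t₀ := by
    have h1 : Real.exp (-κ * (T - t₀)) * -(f y₀ t₀) ≤ N :=
      le_trans (mul_le_mul_of_nonneg_left (neg_le_abs _) he0.le) (hN y₀ t₀ ht₀Icc)
    linarith
  -- lower bound on the weighted difference
  have hvvlb : A₀ * (1 - Real.exp (-lam * (x₀ - y₀)))
      ≤ Real.exp (-κ * (T - t₀)) * (v x₀ t₀ - v y₀ t₀) := by
    rw [hGm] at hpos
    have h1 : A₀ * (1 - Real.exp (-lam * (x₀ - y₀)))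
        ≤ (A₀ + A₁ * (T - t₀)) * (1 - Real.exp (-lam * (x₀ - y₀))) :=
      mul_le_mul_of_nonneg_right hAbar (by linarith)
    have h2 : (0:ℝ) ≤ ε * (x₀ ^ 2 + y₀ ^ 2) :=
      mul_nonneg hε.le (by positivity)
    have h3 : (0:ℝ) ≤ 2 * Ca * ε * (T - t₀) :=
      mul_nonneg (mul_nonneg (by linarith) hε.le) (by linarith [ht₀Icc.2])
    linarith
  have hκvv : κ * (A₀ * (1 - Real.exp (-lam * (x₀ - y₀))))
      ≤ κ * (Real.exp (-κ * (T - t₀)) * (v x₀ t₀ - v y₀ t₀)) :=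
    mul_le_mul_of_nonneg_left hvvlb hκ
  -- substitute PDE into the time inequality
  have hsub : Real.exp (-κ * (T - t₀)) * (Dt v x₀ t₀ - Dt v y₀ t₀)
      = -(a x₀ t₀ * (Real.exp (-κ * (T - t₀)) * Dxx v x₀ t₀))
        + a y₀ t₀ * (Real.exp (-κ * (T - t₀)) * Dxx v y₀ t₀)
        + (Real.exp (-κ * (T - t₀)) * f y₀ t₀ - Real.exp (-κ * (T - t₀)) * f x₀ t₀) := by
    rw [hpdex, hpdey]; ring
  -- second-derivative bounds multiplied by the diffusion coefficient
  have hAW0 : (0:ℝ) ≤ (A₀ + A₁ * (T - t₀)) * (lam ^ 2 * Real.exp (-lam * (x₀ - y₀))) :=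
    mul_nonneg (by linarith) (mul_nonneg (by positivity) hE0.le)
  have htx : m2 * ((A₀ + A₁ * (T - t₀)) * (lam ^ 2 * Real.exp (-lam * (x₀ - y₀))))
      - 2 * (Ca * ε)
      ≤ -(a x₀ t₀ * (Real.exp (-κ * (T - t₀)) * Dxx v x₀ t₀)) := by
    have h1 : a x₀ t₀ * (Real.exp (-κ * (T - t₀)) * Dxx v x₀ t₀)
        ≤ a x₀ t₀ * (2 * ε - (A₀ + A₁ * (T - t₀)) * (lam ^ 2 * Real.exp (-lam * (x₀ - y₀)))) :=
      mul_le_mul_of_nonneg_left (by linarith) hax0.le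
    have h2 : m2 * ((A₀ + A₁ * (T - t₀)) * (lam ^ 2 * Real.exp (-lam * (x₀ - y₀))))
        ≤ a x₀ t₀ * ((A₀ + A₁ * (T - t₀)) * (lam ^ 2 * Real.exp (-lam * (x₀ - y₀)))) :=
      mul_le_mul_of_nonneg_right hax1 hAW0
    have h3 : a x₀ t₀ * ε ≤ Ca * ε := mul_le_mul_of_nonneg_right hax2 hε.le
    linarith [h1, h2, h3]
  have hty : m2 * ((A₀ + A₁ * (T - t₀)) * (lam ^ 2 * Real.exp (-lam * (x₀ - y₀))))
      - 2 * (Ca * ε)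
      ≤ a y₀ t₀ * (Real.exp (-κ * (T - t₀)) * Dxx v y₀ t₀) := by
    have h1 : a y₀ t₀ * ((A₀ + A₁ * (T - t₀)) * (lam ^ 2 * Real.exp (-lam * (x₀ - y₀))) - 2 * ε)
        ≤ a y₀ t₀ * (Real.exp (-κ * (T - t₀)) * Dxx v y₀ t₀) :=
      mul_le_mul_of_nonneg_left (by linarith) hay0.le
    have h2 : m2 * ((A₀ + A₁ * (T - t₀)) * (lam ^ 2 * Real.exp (-lam * (x₀ - y₀))))
        ≤ a y₀ t₀ * ((A₀ + A₁ * (T - t₀)) * (lam ^ 2 * Real.exp (-lam * (x₀ - y₀)))) :=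
      mul_le_mul_of_nonneg_right hay1 hAW0
    have h3 : a y₀ t₀ * ε ≤ Ca * ε := mul_le_mul_of_nonneg_right hay2 hε.le
    linarith [h1, h2, h3]
  -- conclude
  have hAW1 : m2 * (A₀ * (lam ^ 2 * Real.exp (-lam * (x₀ - y₀))))
      ≤ m2 * ((A₀ + A₁ * (T - t₀)) * (lam ^ 2 * Real.exp (-lam * (x₀ - y₀)))) := by
    apply mul_le_mul_of_nonneg_left _ hm2.le
    exact mul_le_mul_of_nonneg_right hAbar (mul_nonneg (by positivity) hE0.le)
  have hQE : m2 * (A₀ * (lam ^ 2 * Real.exp (-lam * (x₀ - y₀))))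
      = (m2 * A₀ * lam ^ 2) * Real.exp (-lam * (x₀ - y₀)) := by ring
  have hmin1 : min (κ * A₀ + A₁) (m2 * A₀ * lam ^ 2) ≤ κ * A₀ + A₁ := min_le_left _ _
  have hmin2 : min (κ * A₀ + A₁) (m2 * A₀ * lam ^ 2) ≤ m2 * A₀ * lam ^ 2 := min_le_right _ _
  have hP : min (κ * A₀ + A₁) (m2 * A₀ * lam ^ 2) * (1 - Real.exp (-lam * (x₀ - y₀)))
      ≤ (κ * A₀ + A₁) * (1 - Real.exp (-lam * (x₀ - y₀))) :=
    mul_le_mul_of_nonneg_right hmin1 (by linarith)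
  have hQ : min (κ * A₀ + A₁) (m2 * A₀ * lam ^ 2) * Real.exp (-lam * (x₀ - y₀))
      ≤ (m2 * A₀ * lam ^ 2) * Real.exp (-lam * (x₀ - y₀)) :=
    mul_le_mul_of_nonneg_right hmin2 hE0.le
  have hQE0 : (0:ℝ) ≤ (m2 * A₀ * lam ^ 2) * Real.exp (-lam * (x₀ - y₀)) := by positivity
  linarith [hdθ, hsub, htx, hty, hκvv, hAW1, hP, hQ, hQE0, hfx1, hfy2, hεsmall]


set_option maxHeartbeats 1000000 in
lemma core (T : ℝ) (hT : 0 < T) (κ : ℝ) (hκ : 0 ≤ κ)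
    (a : ℝ → ℝ → ℝ) (m2 Ca : ℝ) (hm2 : 0 < m2) (hCa : 0 ≤ Ca)
    (ha1 : ∀ x : ℝ, ∀ t ∈ Icc (0:ℝ) T, m2 ≤ a x t)
    (ha2 : ∀ x : ℝ, ∀ t ∈ Icc (0:ℝ) T, a x t ≤ Ca)
    (v f : ℝ → ℝ → ℝ)
    (K : ℝ) (hK : ∀ x : ℝ, ∀ t ∈ Icc (0:ℝ) T, |v x t| ≤ K)
    (hcont : ContinuousOn (fun p : ℝ × ℝ => v p.1 p.2) (univ ×ˢ Icc 0 T))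
    (hdiff : ∀ x : ℝ, ∀ t ∈ Ico (0:ℝ) T,
      DifferentiableAt ℝ (fun y => v y t) x ∧
      DifferentiableAt ℝ (fun y => Dx v y t) x ∧
      DifferentiableAt ℝ (fun s => v x s) t)
    (hpde : ∀ x : ℝ, ∀ t ∈ Ico (0:ℝ) T, Dt v x t + a x t * Dxx v x t + f x t = 0)
    (hterm : ∀ x : ℝ, v x T = 0)
    (N : ℝ) (hN : ∀ x : ℝ, ∀ t ∈ Icc (0:ℝ) T, Real.exp (-κ * (T - t)) * |f x t| ≤ N)
    (A₀ A₁ lam : ℝ) (hA₀ : 0 < A₀) (hA₁ : 0 ≤ A₁) (hlam : 0 < lam)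
    (hc1 : 2 * N < κ * A₀ + A₁) (hc2 : 2 * N < m2 * A₀ * lam ^ 2) :
    ∀ t ∈ Icc (0:ℝ) T, ∀ x y : ℝ, y ≤ x →
      Real.exp (-κ * (T - t)) * (v x t - v y t) ≤ (A₀ + A₁ * T) * lam * (x - y) := by
  intro t ht x y hxy
  have hTt : 0 ≤ T - t := by linarith [ht.2]
  have hCxy : (0:ℝ) ≤ x ^ 2 + y ^ 2 + 2 * Ca * (T - t) :=
    add_nonneg (add_nonneg (sq_nonneg x) (sq_nonneg y))
      (mul_nonneg (by linarith) hTt)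
  have hδ : 0 < min (κ * A₀ + A₁) (m2 * A₀ * lam ^ 2) - 2 * N := by
    have := lt_min hc1 hc2
    linarith
  -- step 1 : pass to the limit ε → 0 in coreZ
  have hmain : Real.exp (-κ * (T - t)) * (v x t - v y t)
      ≤ (A₀ + A₁ * (T - t)) * (1 - Real.exp (-lam * (x - y))) := by
    apply le_of_forall_pos_le_add
    intro η hη
    have hD : (0:ℝ) < 2 * (2 * Ca + 1) := by linarith
    have hε : (0:ℝ) < min ((min (κ * A₀ + A₁) (m2 * A₀ * lam ^ 2) - 2 * N) / (2 * (2 * Ca + 1)))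
        (η / ((x ^ 2 + y ^ 2 + 2 * Ca * (T - t)) + 1)) := by
      apply lt_min
      · positivity
      · positivity
    set ε := min ((min (κ * A₀ + A₁) (m2 * A₀ * lam ^ 2) - 2 * N) / (2 * (2 * Ca + 1)))
        (η / ((x ^ 2 + y ^ 2 + 2 * Ca * (T - t)) + 1)) with hεdef
    have hεsmall : 2 * Ca * ε < min (κ * A₀ + A₁) (m2 * A₀ * lam ^ 2) - 2 * N := by
      have h1 : ε ≤ (min (κ * A₀ + A₁) (m2 * A₀ * lam ^ 2) - 2 * N) / (2 * (2 * Ca + 1)) :=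
        min_le_left _ _
      have h2 : 2 * Ca * ε ≤ 2 * Ca *
          ((min (κ * A₀ + A₁) (m2 * A₀ * lam ^ 2) - 2 * N) / (2 * (2 * Ca + 1))) :=
        mul_le_mul_of_nonneg_left h1 (by linarith)
      have h3 : 2 * Ca * ((min (κ * A₀ + A₁) (m2 * A₀ * lam ^ 2) - 2 * N) / (2 * (2 * Ca + 1)))
          < min (κ * A₀ + A₁) (m2 * A₀ * lam ^ 2) - 2 * N := by
        rw [mul_div_assoc', div_lt_iff₀ hD]
        nlinarith [mul_pos hδ (by linarith : (0:ℝ) < 2 * Ca + 2)]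
      linarith
    have hZ := coreZ T hT κ hκ a m2 Ca hm2 hCa ha1 ha2 v f K hK hcont hdiff hpde hterm
      N hN A₀ A₁ lam hA₀ hA₁ hlam ε hε hεsmall x y t hxy ht
    simp only [GG] at hZ
    have h5 : ε * (x ^ 2 + y ^ 2 + 2 * Ca * (T - t)) ≤ η := by
      have h6 : ε ≤ η / ((x ^ 2 + y ^ 2 + 2 * Ca * (T - t)) + 1) := min_le_right _ _
      have h7 : ε * (x ^ 2 + y ^ 2 + 2 * Ca * (T - t))
          ≤ (η / ((x ^ 2 + y ^ 2 + 2 * Ca * (T - t)) + 1)) * (x ^ 2 + y ^ 2 + 2 * Ca * (T - t)) :=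
        mul_le_mul_of_nonneg_right h6 hCxy
      have h8 : (η / ((x ^ 2 + y ^ 2 + 2 * Ca * (T - t)) + 1)) * (x ^ 2 + y ^ 2 + 2 * Ca * (T - t))
          ≤ η := by
        rw [div_mul_eq_mul_div, div_le_iff₀ (by linarith)]
        nlinarith
      linarith
    nlinarith [hZ, h5]
  -- step 2 : linear bound on the barrier
  have h1 : 1 - Real.exp (-lam * (x - y)) ≤ lam * (x - y) := by
    have := Real.add_one_le_exp (-lam * (x - y))
    linarith
  have h2 : 0 ≤ 1 - Real.exp (-lam * (x - y)) := by
    have harg : -lam * (x - y) ≤ 0 := by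
      have := mul_nonneg hlam.le (sub_nonneg.mpr hxy)
      linarith
    have : Real.exp (-lam * (x - y)) ≤ 1 := by
      rw [← Real.exp_zero]
      exact Real.exp_le_exp.mpr harg
    linarith
  have h3 : A₀ + A₁ * (T - t) ≤ A₀ + A₁ * T := by
    have : A₁ * (T - t) ≤ A₁ * T := mul_le_mul_of_nonneg_left (by linarith [ht.1]) hA₁
    linarith
  have h4 : (0:ℝ) ≤ A₀ + A₁ * T := add_nonneg hA₀.le (mul_nonneg hA₁ hT.le)
  have h5 : (A₀ + A₁ * (T - t)) * (1 - Real.exp (-lam * (x - y)))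
      ≤ (A₀ + A₁ * T) * (1 - Real.exp (-lam * (x - y))) :=
    mul_le_mul_of_nonneg_right h3 h2
  have h6 : (A₀ + A₁ * T) * (1 - Real.exp (-lam * (x - y)))
      ≤ (A₀ + A₁ * T) * (lam * (x - y)) :=
    mul_le_mul_of_nonneg_left h1 h4
  have h7 : (A₀ + A₁ * T) * (lam * (x - y)) = (A₀ + A₁ * T) * lam * (x - y) := by ring
  linarith


set_option maxHeartbeats 1000000 in
lemma key_step (T : ℝ) (hT : 0 < T) (κ : ℝ) (hκ : 0 ≤ κ)
    (a : ℝ → ℝ → ℝ) (m2 Ca : ℝ) (hm2 : 0 < m2) (hCa : 0 ≤ Ca)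
    (ha1 : ∀ x : ℝ, ∀ t ∈ Icc (0:ℝ) T, m2 ≤ a x t)
    (ha2 : ∀ x : ℝ, ∀ t ∈ Icc (0:ℝ) T, a x t ≤ Ca)
    (v f : ℝ → ℝ → ℝ)
    (K : ℝ) (hK : ∀ x : ℝ, ∀ t ∈ Icc (0:ℝ) T, |v x t| ≤ K)
    (hcont : ContinuousOn (fun p : ℝ × ℝ => v p.1 p.2) (univ ×ˢ Icc 0 T))
    (hdiff : ∀ x : ℝ, ∀ t ∈ Ico (0:ℝ) T,
      DifferentiableAt ℝ (fun y => v y t) x ∧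
      DifferentiableAt ℝ (fun y => Dx v y t) x ∧
      DifferentiableAt ℝ (fun s => v x s) t)
    (hpde : ∀ x : ℝ, ∀ t ∈ Ico (0:ℝ) T, Dt v x t + a x t * Dxx v x t + f x t = 0)
    (hterm : ∀ x : ℝ, v x T = 0)
    (N : ℝ) (hN : ∀ x : ℝ, ∀ t ∈ Icc (0:ℝ) T, Real.exp (-κ * (T - t)) * |f x t| ≤ N)
    (A₀ A₁ lam : ℝ) (hA₀ : 0 < A₀) (hA₁ : 0 ≤ A₁) (hlam : 0 < lam)
    (hc1 : 2 * N < κ * A₀ + A₁) (hc2 : 2 * N < m2 * A₀ * lam ^ 2)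
    (x t : ℝ) (htIco : t ∈ Ico (0:ℝ) T) :
    Real.exp (-κ * (T - t)) * |Dx v x t| ≤ (A₀ + A₁ * T) * lam := by
  have htIcc : t ∈ Icc (0:ℝ) T := ⟨htIco.1, htIco.2.le⟩
  have hup := core T hT κ hκ a m2 Ca hm2 hCa ha1 ha2 v f K hK hcont hdiff hpde hterm
    N hN A₀ A₁ lam hA₀ hA₁ hlam hc1 hc2
  -- the hypotheses for -v and -f
  have hKn : ∀ x : ℝ, ∀ t ∈ Icc (0:ℝ) T, |(-(v x t))| ≤ K := by
    intro x t ht; rw [abs_neg]; exact hK x t ht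
  have hcontn : ContinuousOn (fun p : ℝ × ℝ => -(v p.1 p.2)) (univ ×ˢ Icc 0 T) := hcont.neg
  have hDxneg : ∀ y t : ℝ, Dx (fun a b => -(v a b)) y t = -(Dx v y t) := by
    intro y t
    show deriv (fun z => -(v z t)) y = -(deriv (fun z => v z t) y)
    exact deriv.neg
  have hDxfun : ∀ t : ℝ, (fun y => Dx (fun a b => -(v a b)) y t) = fun y => -(Dx v y t) := by
    intro t; funext y; exact hDxneg y t
  have hDxxneg : ∀ y t : ℝ, Dxx (fun a b => -(v a b)) y t = -(Dxx v y t) := by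
    intro y t
    show deriv (fun z => Dx (fun a b => -(v a b)) z t) y = -(deriv (fun z => Dx v z t) y)
    rw [hDxfun t]
    exact deriv.neg
  have hDtneg : ∀ y t : ℝ, Dt (fun a b => -(v a b)) y t = -(Dt v y t) := by
    intro y t
    show deriv (fun s => -(v y s)) t = -(deriv (fun s => v y s) t)
    exact deriv.neg
  have hdiffn : ∀ x : ℝ, ∀ t ∈ Ico (0:ℝ) T,
      DifferentiableAt ℝ (fun y => -(v y t)) x ∧
      DifferentiableAt ℝ (fun y => Dx (fun a b => -(v a b)) y t) x ∧
      DifferentiableAt ℝ (fun s => -(v x s)) t := by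
    intro x t ht
    refine ⟨((hdiff x t ht).1).neg, ?_, ((hdiff x t ht).2.2).neg⟩
    rw [hDxfun t]
    exact ((hdiff x t ht).2.1).neg
  have hpden : ∀ x : ℝ, ∀ t ∈ Ico (0:ℝ) T,
      Dt (fun a b => -(v a b)) x t + a x t * Dxx (fun a b => -(v a b)) x t + (-(f x t)) = 0 := by
    intro x t ht
    rw [hDtneg, hDxxneg]
    have := hpde x t ht
    ring_nf
    ring_nf at this
    linarith
  have htermn : ∀ x : ℝ, -(v x T) = 0 := by
    intro x; rw [hterm x]; ring
  have hNn : ∀ x : ℝ, ∀ t ∈ Icc (0:ℝ) T, Real.exp (-κ * (T - t)) * |(-(f x t))| ≤ N := by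
    intro x t ht; rw [abs_neg]; exact hN x t ht
  have hdn := core T hT κ hκ a m2 Ca hm2 hCa ha1 ha2 (fun a b => -(v a b)) (fun a b => -(f a b))
    K hKn hcontn hdiffn hpden htermn N hNn A₀ A₁ lam hA₀ hA₁ hlam hc1 hc2
  -- Lipschitz bound for the weighted function
  have hL0 : (0:ℝ) ≤ (A₀ + A₁ * T) * lam :=
    mul_nonneg (add_nonneg hA₀.le (mul_nonneg hA₁ hT.le)) hlam.le
  have hφd : DifferentiableAt ℝ (fun z => Real.exp (-κ * (T - t)) * v z t) x :=
    ((hdiff x t htIco).1).const_mul _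
  have hφlip : ∀ z : ℝ, |Real.exp (-κ * (T - t)) * v z t - Real.exp (-κ * (T - t)) * v x t|
      ≤ (A₀ + A₁ * T) * lam * |z - x| := by
    intro z
    rcases le_total x z with h | h
    · have e1 := hup t htIcc z x h
      have e2 := hdn t htIcc z x h
      rw [abs_of_nonneg (sub_nonneg.mpr h)]
      rw [abs_le]
      constructor
      · have : Real.exp (-κ * (T - t)) * (-(v z t) - -(v x t))
            ≤ (A₀ + A₁ * T) * lam * (z - x) := e2
        nlinarith [this]
      · nlinarith [e1]
    · have e1 := hup t htIcc x z h
      have e2 := hdn t htIcc x z h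
      rw [abs_of_nonpos (sub_nonpos.mpr h), abs_le]
      constructor
      · nlinarith [e1]
      · have : Real.exp (-κ * (T - t)) * (-(v x t) - -(v z t))
            ≤ (A₀ + A₁ * T) * lam * (x - z) := e2
        nlinarith [this]
  have habs := abs_deriv_le_of_lip (fun z => Real.exp (-κ * (T - t)) * v z t) x
    ((A₀ + A₁ * T) * lam) hφd hφlip
  have hderiv : deriv (fun z => Real.exp (-κ * (T - t)) * v z t) x
      = Real.exp (-κ * (T - t)) * Dx v x t :=
    deriv_const_mul _ (hdiff x t htIco).1
  rw [hderiv, abs_mul, abs_of_pos (Real.exp_pos _)] at habs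
  exact habs


set_option maxHeartbeats 1000000 in
/-- Weighted gradient estimate for the Cauchy problem: under (A1) there is `M > 0`
such that for every `κ > 0`, every bounded, locally Hölder source `f` and every bounded
classical solution `v` of the Cauchy problem,
`sup e^{-κ(T-t)}|D_x v| ≤ (M/κ^{1/3})·sup e^{-κ(T-t)}|f|`, the suprema being expressed
through arbitrary upper bounds `N` of the weighted values of `f`. -/
theorem cauchy_weighted_gradient_estimate
    (T : ℝ) (hT : 0 < T) (σ : ℝ → ℝ → ℝ) (hA1 : CondA1 T σ) :
    ∃ M > 0, ∀ κ > (0:ℝ), ∀ f : ℝ → ℝ → ℝ,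
      (∃ C, ∀ x : ℝ, ∀ t ∈ Icc (0:ℝ) T, |f x t| ≤ C) →
      HolderOnCompacts (univ ×ˢ Icc 0 T) f →
      ∀ v : ℝ → ℝ → ℝ, IsBddClassicalSolCauchy T σ f v →
      ∀ N : ℝ, (∀ x : ℝ, ∀ t ∈ Icc (0:ℝ) T, Real.exp (-κ * (T - t)) * |f x t| ≤ N) →
      ∀ x : ℝ, ∀ t ∈ Ico (0:ℝ) T,
        Real.exp (-κ * (T - t)) * |Dx v x t| ≤ M / κ ^ ((1:ℝ)/3) * N := by
  obtain ⟨⟨C, hC⟩, ⟨m, hm0, hm⟩, -⟩ := hA1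
  have hm2 : (0:ℝ) < m ^ 2 / 2 := by positivity
  have hsm : (0:ℝ) < Real.sqrt (m ^ 2 / 2) := Real.sqrt_pos.mpr hm2
  have hMt1 : (0:ℝ) < 2 / Real.sqrt (m ^ 2 / 2) := by positivity
  have hMt2 : (0:ℝ) ≤ 2 * Real.sqrt T * ((m ^ 2 / 2)⁻¹ + 1) := by positivity
  refine ⟨2 / Real.sqrt (m ^ 2 / 2) + 2 * Real.sqrt T * ((m ^ 2 / 2)⁻¹ + 1) + 1,
    by linarith, ?_⟩
  intro κ hκ f hfb hfH v hsol N hN x t htIco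
  obtain ⟨⟨K, hK⟩, hcont, hdiff, hcdx, hcdxx, hcdt, hpde, htermv⟩ := hsol
  have ha1 : ∀ x : ℝ, ∀ t ∈ Icc (0:ℝ) T, m ^ 2 / 2 ≤ σ x t ^ 2 / 2 := by
    intro x t ht
    have h := hm x t ht
    have h2 : m ^ 2 ≤ |σ x t| ^ 2 := pow_le_pow_left₀ hm0.le h 2
    rw [sq_abs] at h2
    linarith
  have ha2 : ∀ x : ℝ, ∀ t ∈ Icc (0:ℝ) T, σ x t ^ 2 / 2 ≤ C ^ 2 / 2 := by
    intro x t ht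
    have h2 : |σ x t| ^ 2 ≤ C ^ 2 := pow_le_pow_left₀ (abs_nonneg _) (hC x t ht) 2
    rw [sq_abs] at h2
    linarith
  have hCa : (0:ℝ) ≤ C ^ 2 / 2 := by positivity
  have hN0 : (0:ℝ) ≤ N :=
    le_trans (mul_nonneg (Real.exp_pos _).le (abs_nonneg _)) (hN 0 0 ⟨le_refl _, hT.le⟩)
  apply le_of_forall_pos_le_add
  intro η hη
  have hpow : (0:ℝ) < κ ^ ((1:ℝ)/3) := Real.rpow_pos_of_pos hκ _
  rcases le_or_gt 1 κ with hκ1 | hκ1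
  · -- case κ ≥ 1
    have hsk : (0:ℝ) < Real.sqrt κ := Real.sqrt_pos.mpr hκ
    have hlam0 : (0:ℝ) < Real.sqrt κ / Real.sqrt (m ^ 2 / 2) := div_pos hsk hsm
    have hlam2 : (Real.sqrt κ / Real.sqrt (m ^ 2 / 2)) ^ 2 = κ / (m ^ 2 / 2) := by
      rw [div_pow, Real.sq_sqrt hκ.le, Real.sq_sqrt hm2.le]
    have hc0 : (0:ℝ) < Real.sqrt κ / Real.sqrt (m ^ 2 / 2) / κ := div_pos hlam0 hκ
    have hθ : (0:ℝ) < η / (Real.sqrt κ / Real.sqrt (m ^ 2 / 2) / κ + 1) :=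
      div_pos hη (by linarith)
    set θ := η / (Real.sqrt κ / Real.sqrt (m ^ 2 / 2) / κ + 1) with hθdef
    have hA₀ : (0:ℝ) < (2 * N + θ) / κ := div_pos (by linarith) hκ
    have he1 : κ * ((2 * N + θ) / κ) = 2 * N + θ := by field_simp
    have hc1 : 2 * N < κ * ((2 * N + θ) / κ) + 0 := by rw [he1]; linarith
    have he2 : m ^ 2 / 2 * ((2 * N + θ) / κ) * (Real.sqrt κ / Real.sqrt (m ^ 2 / 2)) ^ 2
        = 2 * N + θ := by
      rw [hlam2]
      field_simp
    have hc2 : 2 * N < m ^ 2 / 2 * ((2 * N + θ) / κ)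
        * (Real.sqrt κ / Real.sqrt (m ^ 2 / 2)) ^ 2 := by rw [he2]; linarith
    have hkey := key_step T hT κ hκ.le (fun x t => σ x t ^ 2 / 2) (m ^ 2 / 2) (C ^ 2 / 2)
      hm2 hCa ha1 ha2 v f K hK hcont hdiff hpde htermv N hN
      ((2 * N + θ) / κ) 0 (Real.sqrt κ / Real.sqrt (m ^ 2 / 2)) hA₀ le_rfl hlam0 hc1 hc2
      x t htIco
    have heq : ((2 * N + θ) / κ + 0 * T) * (Real.sqrt κ / Real.sqrt (m ^ 2 / 2))
        = 2 * N * (Real.sqrt κ / Real.sqrt (m ^ 2 / 2) / κ)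
          + θ * (Real.sqrt κ / Real.sqrt (m ^ 2 / 2) / κ) := by ring
    rw [heq] at hkey
    have hθc : θ * (Real.sqrt κ / Real.sqrt (m ^ 2 / 2) / κ) ≤ η := by
      rw [hθdef, div_mul_eq_mul_div, div_le_iff₀ (by linarith)]
      nlinarith [hc0.le, hη.le]
    have h56 : Real.sqrt κ * κ ^ ((1:ℝ)/3) ≤ κ := by
      have e1 : Real.sqrt κ * κ ^ ((1:ℝ)/3) = κ ^ ((5:ℝ)/6) := by
        rw [Real.sqrt_eq_rpow, ← Real.rpow_add hκ]
        norm_num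
      rw [e1]
      calc κ ^ ((5:ℝ)/6) ≤ κ ^ ((1:ℝ)) := Real.rpow_le_rpow_of_exponent_le hκ1 (by norm_num)
        _ = κ := Real.rpow_one κ
    have h7 : Real.sqrt κ * κ ^ ((1:ℝ)/3) / κ ≤ 1 := by
      rw [div_le_one hκ]; exact h56
    have hmainb : 2 * N * (Real.sqrt κ / Real.sqrt (m ^ 2 / 2) / κ)
        ≤ (2 / Real.sqrt (m ^ 2 / 2) + 2 * Real.sqrt T * ((m ^ 2 / 2)⁻¹ + 1) + 1)
          / κ ^ ((1:ℝ)/3) * N := by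
      rw [div_mul_eq_mul_div, le_div_iff₀ hpow]
      have e3 : 2 * N * (Real.sqrt κ / Real.sqrt (m ^ 2 / 2) / κ) * κ ^ ((1:ℝ)/3)
          = (2 * N / Real.sqrt (m ^ 2 / 2)) * (Real.sqrt κ * κ ^ ((1:ℝ)/3) / κ) := by
        ring
      rw [e3]
      have h8 : (2 * N / Real.sqrt (m ^ 2 / 2)) * (Real.sqrt κ * κ ^ ((1:ℝ)/3) / κ)
          ≤ (2 * N / Real.sqrt (m ^ 2 / 2)) * 1 :=
        mul_le_mul_of_nonneg_left h7 (div_nonneg (by linarith) hsm.le)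
      have h9 : 2 * N / Real.sqrt (m ^ 2 / 2) = (2 / Real.sqrt (m ^ 2 / 2)) * N := by ring
      have h10 : (2 / Real.sqrt (m ^ 2 / 2)) * N
          ≤ (2 / Real.sqrt (m ^ 2 / 2) + 2 * Real.sqrt T * ((m ^ 2 / 2)⁻¹ + 1) + 1) * N :=
        mul_le_mul_of_nonneg_right (by linarith) hN0
      linarith
    linarith
  · -- case κ < 1
    have hst : (0:ℝ) < Real.sqrt T := Real.sqrt_pos.mpr hT
    have hlam0 : (0:ℝ) < (Real.sqrt T)⁻¹ := inv_pos.mpr hst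
    have hlam2 : ((Real.sqrt T)⁻¹) ^ 2 = T⁻¹ := by
      rw [inv_pow, Real.sq_sqrt hT.le]
    have hc0 : (0:ℝ) < Real.sqrt T * ((m ^ 2 / 2)⁻¹ + 1) := by positivity
    have hθ : (0:ℝ) < η / (Real.sqrt T * ((m ^ 2 / 2)⁻¹ + 1) + 1) := div_pos hη (by linarith)
    set θ := η / (Real.sqrt T * ((m ^ 2 / 2)⁻¹ + 1) + 1) with hθdef
    have hA₀ : (0:ℝ) < (2 * N + θ) * T / (m ^ 2 / 2) :=
      div_pos (mul_pos (by linarith) hT) hm2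
    have hc1 : 2 * N < κ * ((2 * N + θ) * T / (m ^ 2 / 2)) + (2 * N + θ) := by
      have := mul_nonneg hκ.le hA₀.le
      linarith
    have he2 : m ^ 2 / 2 * ((2 * N + θ) * T / (m ^ 2 / 2)) * ((Real.sqrt T)⁻¹) ^ 2
        = 2 * N + θ := by
      rw [hlam2]
      field_simp
    have hc2 : 2 * N < m ^ 2 / 2 * ((2 * N + θ) * T / (m ^ 2 / 2)) * ((Real.sqrt T)⁻¹) ^ 2 := by
      rw [he2]; linarith
    have hkey := key_step T hT κ hκ.le (fun x t => σ x t ^ 2 / 2) (m ^ 2 / 2) (C ^ 2 / 2)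
      hm2 hCa ha1 ha2 v f K hK hcont hdiff hpde htermv N hN
      ((2 * N + θ) * T / (m ^ 2 / 2)) (2 * N + θ) ((Real.sqrt T)⁻¹) hA₀ (by linarith) hlam0
      hc1 hc2 x t htIco
    have hTs : T * (Real.sqrt T)⁻¹ = Real.sqrt T := by
      rw [← div_eq_mul_inv]; exact Real.div_sqrt
    have heq : ((2 * N + θ) * T / (m ^ 2 / 2) + (2 * N + θ) * T) * (Real.sqrt T)⁻¹
        = (2 * N + θ) * ((m ^ 2 / 2)⁻¹ + 1) * (T * (Real.sqrt T)⁻¹) := by ring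
    rw [heq, hTs] at hkey
    have hθc : θ * (Real.sqrt T * ((m ^ 2 / 2)⁻¹ + 1)) ≤ η := by
      rw [hθdef, div_mul_eq_mul_div, div_le_iff₀ (by linarith)]
      nlinarith [hc0.le, hη.le]
    have hpowle1 : κ ^ ((1:ℝ)/3) ≤ 1 := Real.rpow_le_one hκ.le hκ1.le (by norm_num)
    have hMM : (2 / Real.sqrt (m ^ 2 / 2) + 2 * Real.sqrt T * ((m ^ 2 / 2)⁻¹ + 1) + 1)
        ≤ (2 / Real.sqrt (m ^ 2 / 2) + 2 * Real.sqrt T * ((m ^ 2 / 2)⁻¹ + 1) + 1)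
          / κ ^ ((1:ℝ)/3) := by
      rw [le_div_iff₀ hpow]
      nlinarith [hMt1, hMt2, hpowle1, hpow.le]
    have hmainb : 2 * N * (Real.sqrt T * ((m ^ 2 / 2)⁻¹ + 1))
        ≤ (2 / Real.sqrt (m ^ 2 / 2) + 2 * Real.sqrt T * ((m ^ 2 / 2)⁻¹ + 1) + 1)
          / κ ^ ((1:ℝ)/3) * N := by
      have h1 : 2 * N * (Real.sqrt T * ((m ^ 2 / 2)⁻¹ + 1))
          ≤ (2 / Real.sqrt (m ^ 2 / 2) + 2 * Real.sqrt T * ((m ^ 2 / 2)⁻¹ + 1) + 1) * N := by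
        have h2 : 2 * (Real.sqrt T * ((m ^ 2 / 2)⁻¹ + 1))
            ≤ 2 / Real.sqrt (m ^ 2 / 2) + 2 * Real.sqrt T * ((m ^ 2 / 2)⁻¹ + 1) + 1 := by
          linarith
        nlinarith [hN0, h2]
      have h3 : (2 / Real.sqrt (m ^ 2 / 2) + 2 * Real.sqrt T * ((m ^ 2 / 2)⁻¹ + 1) + 1) * N
          ≤ (2 / Real.sqrt (m ^ 2 / 2) + 2 * Real.sqrt T * ((m ^ 2 / 2)⁻¹ + 1) + 1)
            / κ ^ ((1:ℝ)/3) * N :=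
        mul_le_mul_of_nonneg_right hMM hN0
      linarith
    have hexp : (2 * N + θ) * ((m ^ 2 / 2)⁻¹ + 1) * Real.sqrt T
        = 2 * N * (Real.sqrt T * ((m ^ 2 / 2)⁻¹ + 1))
          + θ * (Real.sqrt T * ((m ^ 2 / 2)⁻¹ + 1)) := by ring
    rw [hexp] at hkey
    linarith
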